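/- arXiv:2201.00835 — 2 statements merged into one kernel-verified Lean document; each statement's English description precedes it below -/
import Mathlib

section
/- Direct-sum inequality for the sandwiched Rényi relative entropy: for every α > 1 and classical–quantum operators κ = ∑_x p(x)|x⟩⟨x|⊗κ_x (a state) and λ = ∑_x q(x)|x⟩⟨x|⊗λ_x (positive semidefinite), one has D̃_α(κ‖λ) ≥ D(p‖q) + ∑_x p(x) D̃_α(κ_x‖λ_x). -/
open scoped Matrix Classical ComplexOrder

namespace RainsPaper

/-- Natural matrix logarithm of a Hermitian matrix via spectral decomposition
(with the convention `log 0 = 0` on the kernel); junk value `0` otherwise. -/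
noncomputable def matLog {n : Type} [Fintype n] [DecidableEq n] (A : Matrix n n ℂ) :
    Matrix n n ℂ :=
  if hA : A.IsHermitian then
    (hA.eigenvectorUnitary : Matrix n n ℂ) *
      (Matrix.diagonal fun i => (Real.log (hA.eigenvalues i) : ℂ)) *
      (star (hA.eigenvectorUnitary : Matrix n n ℂ))
  else 0

/-- Real power of a Hermitian matrix via spectral decomposition (with the convention
`0 ^ r = 0` for `r ≠ 0`, so negative powers are taken on the support);
junk value `0` otherwise. -/
noncomputable def matPow {n : Type} [Fintype n] [DecidableEq n] (A : Matrix n n ℂ) (r : ℝ) :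
    Matrix n n ℂ :=
  if hA : A.IsHermitian then
    (hA.eigenvectorUnitary : Matrix n n ℂ) *
      (Matrix.diagonal fun i => ((hA.eigenvalues i ^ r : ℝ) : ℂ)) *
      (star (hA.eigenvectorUnitary : Matrix n n ℂ))
  else 0

/-- A state is a positive semidefinite operator with unit trace. -/
def IsState {n : Type} [Fintype n] (ρ : Matrix n n ℂ) : Prop :=
  ρ.PosSemidef ∧ ρ.trace = 1

/-- `supp ω ⊆ supp τ`, expressed (for Hermitian matrices) as `ker τ ⊆ ker ω`. -/
def SuppSubset {n : Type} [Fintype n] (ω τ : Matrix n n ℂ) : Prop :=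
  ∀ v : n → ℂ, τ.mulVec v = 0 → ω.mulVec v = 0

/-- Trace norm `‖X‖₁ = Tr √(X†X)`. -/
noncomputable def traceNorm {n : Type} [Fintype n] [DecidableEq n] (X : Matrix n n ℂ) : ℝ :=
  ((matPow (Xᴴ * X) 2⁻¹).trace).re

/-- Fidelity `F(ω,τ) = ‖√ω √τ‖₁²`. -/
noncomputable def fidelity {n : Type} [Fintype n] [DecidableEq n] (ω τ : Matrix n n ℂ) : ℝ :=
  (traceNorm (matPow ω 2⁻¹ * matPow τ 2⁻¹)) ^ 2

/-- Extended base-2 logarithm: `elog2 x = log₂ x` for `x > 0` and `-∞` for `x ≤ 0`. -/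
noncomputable def elog2 (x : ℝ) : EReal :=
  if x ≤ 0 then ⊥ else ((Real.logb 2 x : ℝ) : EReal)

/-- Quantum relative entropy `D(ω‖τ) = Tr[ω (log₂ ω - log₂ τ)]` if `supp ω ⊆ supp τ`,
and `+∞` otherwise. -/
noncomputable def qRelEnt {n : Type} [Fintype n] [DecidableEq n] (ω τ : Matrix n n ℂ) : EReal :=
  if SuppSubset ω τ then
    ((((ω * (matLog ω - matLog τ)).trace).re / Real.log 2 : ℝ) : EReal)
  else ⊤

/-- Sandwiched Rényi relative entropy
`D̃_α(ω‖τ) = (α-1)⁻¹ log₂ Tr[(τ^{(1-α)/(2α)} ω τ^{(1-α)/(2α)})^α]` when `α ∈ (0,1)`, or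
`α > 1` and `supp ω ⊆ supp τ`; `+∞` otherwise. -/
noncomputable def sandRenyi {n : Type} [Fintype n] [DecidableEq n] (α : ℝ)
    (ω τ : Matrix n n ℂ) : EReal :=
  if (0 < α ∧ α < 1) ∨ (1 < α ∧ SuppSubset ω τ) then
    (((α - 1)⁻¹ : ℝ) : EReal) *
      elog2 (((matPow (matPow τ ((1 - α) / (2 * α)) * ω * matPow τ ((1 - α) / (2 * α))) α).trace).re)
  else ⊤

/-- Petz Rényi relative entropy `D_α(ω‖τ) = (α-1)⁻¹ log₂ Tr[ω^α τ^{1-α}]` when `α ∈ (0,1)`,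
or `α > 1` and `supp ω ⊆ supp τ`; `+∞` otherwise. -/
noncomputable def petzRenyi {n : Type} [Fintype n] [DecidableEq n] (α : ℝ)
    (ω τ : Matrix n n ℂ) : EReal :=
  if (0 < α ∧ α < 1) ∨ (1 < α ∧ SuppSubset ω τ) then
    (((α - 1)⁻¹ : ℝ) : EReal) * elog2 (((matPow ω α * matPow τ (1 - α)).trace).re)
  else ⊤

/-- Geometric Rényi relative entropy `D̂_α(ω‖τ) = (α-1)⁻¹ log₂ Tr[τ (τ^{-1/2} ω τ^{-1/2})^α]`
(inverses on the support) when `α ∈ (0,1)`, or `α > 1` and `supp ω ⊆ supp τ`; `+∞` otherwise. -/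
noncomputable def geomRenyi {n : Type} [Fintype n] [DecidableEq n] (α : ℝ)
    (ω τ : Matrix n n ℂ) : EReal :=
  if (0 < α ∧ α < 1) ∨ (1 < α ∧ SuppSubset ω τ) then
    (((α - 1)⁻¹ : ℝ) : EReal) *
      elog2 (((τ * matPow (matPow τ (-2⁻¹) * ω * matPow τ (-2⁻¹)) α).trace).re)
  else ⊤

/-- Classical relative entropy `D(p‖q)`, equal to `+∞` unless `supp p ⊆ supp q`
(terms with `p x = 0` contribute zero). -/
noncomputable def cRelEnt {X : Type} [Fintype X] (p q : X → ℝ) : EReal :=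
  if ∀ x, p x ≠ 0 → q x ≠ 0 then
    ((∑ x, p x * Real.logb 2 (p x / q x) : ℝ) : EReal)
  else ⊤

/-- `p` is a probability distribution on the finite set `X`. -/
def IsProb {X : Type} [Fintype X] (p : X → ℝ) : Prop :=
  (∀ x, 0 ≤ p x) ∧ ∑ x, p x = 1

/-- The classical–quantum operator `∑ x p(x) |x⟩⟨x| ⊗ K x`. -/
noncomputable def cqOp {X A : Type} [DecidableEq X] (p : X → ℝ)
    (K : X → Matrix A A ℂ) : Matrix (X × A) (X × A) ℂ :=
  Matrix.of fun a b => if a.1 = b.1 then (p a.1 : ℂ) * K a.1 a.2 b.2 else 0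

/-- Partial transpose (on the second tensor factor):
`(id ⊗ T)(X)_{(i,k),(j,l)} = X_{(i,l),(j,k)}`. -/
def ptrans {a b : Type} (X : Matrix (a × b) (a × b) ℂ) : Matrix (a × b) (a × b) ℂ :=
  Matrix.of fun p q => X (p.1, q.2) (q.1, p.2)

/-- The partial transpose as a linear map. -/
def ptransL {a b : Type} : Matrix (a × b) (a × b) ℂ →ₗ[ℂ] Matrix (a × b) (a × b) ℂ where
  toFun := ptrans
  map_add' _ _ := rfl
  map_smul' _ _ := rfl

/-- `PPT'` : positive semidefinite bipartite operators whose partial transpose has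
trace norm at most 1. -/
def PPTprime {a b : Type} [Fintype a] [Fintype b] [DecidableEq a] [DecidableEq b]
    (σ : Matrix (a × b) (a × b) ℂ) : Prop :=
  σ.PosSemidef ∧ traceNorm (ptrans σ) ≤ 1

/-- The Rains relative entropy `R(ρ) = inf_{σ ∈ PPT'} D(ρ‖σ)`. -/
noncomputable def Rains {a b : Type} [Fintype a] [Fintype b] [DecidableEq a] [DecidableEq b]
    (ρ : Matrix (a × b) (a × b) ℂ) : EReal :=
  ⨅ σ : {σ : Matrix (a × b) (a × b) ℂ // PPTprime σ}, qRelEnt ρ σ.1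

/-- The sandwiched Rényi Rains relative entropy `R̃_α(ρ) = inf_{σ ∈ PPT'} D̃_α(ρ‖σ)`. -/
noncomputable def sandRains {a b : Type} [Fintype a] [Fintype b] [DecidableEq a] [DecidableEq b]
    (α : ℝ) (ρ : Matrix (a × b) (a × b) ℂ) : EReal :=
  ⨅ σ : {σ : Matrix (a × b) (a × b) ℂ // PPTprime σ}, sandRenyi α ρ σ.1

/-- The extension `id_{Fin k} ⊗ Φ` of a linear map on matrices. -/
def matExt {n m : Type} [Fintype n] [Fintype m]
    (Φ : Matrix n n ℂ →ₗ[ℂ] Matrix m m ℂ) (k : ℕ)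
    (X : Matrix (Fin k × n) (Fin k × n) ℂ) : Matrix (Fin k × m) (Fin k × m) ℂ :=
  Matrix.of fun p q => Φ (Matrix.of fun i j => X (p.1, i) (q.1, j)) p.2 q.2

/-- Complete positivity: all extensions `id_k ⊗ Φ` preserve positive semidefiniteness. -/
def IsCP {n m : Type} [Fintype n] [Fintype m]
    (Φ : Matrix n n ℂ →ₗ[ℂ] Matrix m m ℂ) : Prop :=
  ∀ (k : ℕ) (X : Matrix (Fin k × n) (Fin k × n) ℂ), X.PosSemidef → (matExt Φ k X).PosSemidef

/-- Trace preservation. -/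
def IsTP {n m : Type} [Fintype n] [Fintype m]
    (Φ : Matrix n n ℂ →ₗ[ℂ] Matrix m m ℂ) : Prop :=
  ∀ X : Matrix n n ℂ, (Φ X).trace = X.trace

/-- A selective PPT operation: a family of completely positive maps `P x` such that
`(id ⊗ T) ∘ P x ∘ (id ⊗ T)` is completely positive for every `x` and `∑ x, P x` is
trace preserving. -/
def IsSelectivePPT {a b a' b' X : Type} [Fintype a] [Fintype b] [Fintype a'] [Fintype b']
    [Fintype X]
    (P : X → (Matrix (a × b) (a × b) ℂ →ₗ[ℂ] Matrix (a' × b') (a' × b') ℂ)) : Prop :=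
  (∀ x, IsCP (P x)) ∧ (∀ x, IsCP (ptransL ∘ₗ P x ∘ₗ ptransL)) ∧
    (∀ ρ : Matrix (a × b) (a × b) ℂ, ∑ x, ((P x) ρ).trace = ρ.trace)

/-- The maximally entangled state `Φ^d = |Φ^d⟩⟨Φ^d|`, `|Φ^d⟩ = d^{-1/2} ∑ i |i⟩|i⟩`. -/
noncomputable def maxEnt (d : ℕ) : Matrix (Fin d × Fin d) (Fin d × Fin d) ℂ :=
  Matrix.of fun p q => if p.1 = p.2 ∧ q.1 = q.2 then ((d : ℂ))⁻¹ else 0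

/-- Binary entropy `h₂(ε) = -ε log₂ ε - (1-ε) log₂ (1-ε)`. -/
noncomputable def h2 (ε : ℝ) : ℝ :=
  -ε * Real.logb 2 ε - (1 - ε) * Real.logb 2 (1 - ε)



section AuxSpectral
variable {n : Type} [Fintype n] [DecidableEq n]

lemma isHermitian_of_decomp (A U : Matrix n n ℂ) (hU : U ∈ Matrix.unitaryGroup n ℂ)
    (d : n → ℝ) (hAd : A = U * Matrix.diagonal (fun i => (d i : ℂ)) * star U) :
    A.IsHermitian := by
  rw [hAd]
  unfold Matrix.IsHermitian
  rw [Matrix.conjTranspose_mul, Matrix.conjTranspose_mul, Matrix.diagonal_conjTranspose]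
  simp only [Matrix.star_eq_conjTranspose, Matrix.conjTranspose_conjTranspose, Pi.star_def,
    Complex.star_def, Complex.conj_ofReal, mul_assoc]

lemma matPow_eq_of_decomp (A U : Matrix n n ℂ) (hU : U ∈ Matrix.unitaryGroup n ℂ)
    (d : n → ℝ) (hAd : A = U * Matrix.diagonal (fun i => (d i : ℂ)) * star U) (r : ℝ) :
    matPow A r = U * Matrix.diagonal (fun i => ((d i ^ r : ℝ) : ℂ)) * star U := by
  have hA : A.IsHermitian := isHermitian_of_decomp A U hU d hAd
  rw [matPow, dif_pos hA]
  set V : Matrix n n ℂ := (hA.eigenvectorUnitary : Matrix n n ℂ) with hV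
  have hVV : V * star V = 1 := (Matrix.mem_unitaryGroup_iff).mp hA.eigenvectorUnitary.2
  have hVV' : star V * V = 1 := (Matrix.mem_unitaryGroup_iff').mp hA.eigenvectorUnitary.2
  have hUU : U * star U = 1 := (Matrix.mem_unitaryGroup_iff).mp hU
  have hUU' : star U * U = 1 := (Matrix.mem_unitaryGroup_iff').mp hU
  have hspec : A = V * Matrix.diagonal (fun i => ((hA.eigenvalues i : ℝ) : ℂ)) * star V := by
    exact hA.spectral_theorem
  set W : Matrix n n ℂ := star V * U with hW
  have key : ∀ i j, (hA.eigenvalues i : ℂ) * W i j = W i j * (d j : ℂ) := by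
    intro i j
    have h1 : Matrix.diagonal (fun i => ((hA.eigenvalues i : ℝ) : ℂ)) * W =
        W * Matrix.diagonal (fun i => (d i : ℂ)) := by
      calc Matrix.diagonal (fun i => ((hA.eigenvalues i : ℝ) : ℂ)) * W
          = star V * (V * Matrix.diagonal (fun i => ((hA.eigenvalues i : ℝ) : ℂ)) * star V) * U := by
            rw [hW]; rw [show star V * (V * Matrix.diagonal (fun i => ((hA.eigenvalues i : ℝ) : ℂ)) * star V) * U = (star V * V) * Matrix.diagonal (fun i => ((hA.eigenvalues i : ℝ) : ℂ)) * (star V * U) by noncomm_ring, hVV', one_mul]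
        _ = star V * (U * Matrix.diagonal (fun i => (d i : ℂ)) * star U) * U := by rw [← hspec, ← hAd]
        _ = W * Matrix.diagonal (fun i => (d i : ℂ)) := by
            rw [hW]; rw [show star V * (U * Matrix.diagonal (fun i => (d i : ℂ)) * star U) * U = (star V * U) * Matrix.diagonal (fun i => (d i : ℂ)) * (star U * U) by noncomm_ring, hUU', mul_one]
    have h2 := congrArg (fun M : Matrix n n ℂ => M i j) h1
    simpa [Matrix.diagonal_mul, Matrix.mul_diagonal] using h2
  have key2 : Matrix.diagonal (fun i => ((hA.eigenvalues i ^ r : ℝ) : ℂ)) * W =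
      W * Matrix.diagonal (fun i => ((d i ^ r : ℝ) : ℂ)) := by
    ext i j
    simp only [Matrix.diagonal_mul, Matrix.mul_diagonal]
    by_cases h : W i j = 0
    · simp [h]
    · have h3 : (hA.eigenvalues i : ℂ) = (d j : ℂ) := by
        have := key i j
        rw [mul_comm (W i j) _] at this
        exact mul_right_cancel₀ h this
      have h4 : hA.eigenvalues i = d j := by exact_mod_cast h3
      rw [h4, mul_comm]
  calc V * Matrix.diagonal (fun i => ((hA.eigenvalues i ^ r : ℝ) : ℂ)) * star V
      = V * (Matrix.diagonal (fun i => ((hA.eigenvalues i ^ r : ℝ) : ℂ)) * W) * star U * (U * star U)⁻¹ := by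
        rw [hUU]; rw [hW]
        rw [show V * (Matrix.diagonal (fun i => ((hA.eigenvalues i ^ r : ℝ) : ℂ)) * (star V * U)) * star U * 1⁻¹ = (V * Matrix.diagonal (fun i => ((hA.eigenvalues i ^ r : ℝ) : ℂ)) * star V) * (U * star U) * 1⁻¹ by noncomm_ring, hUU]
        simp
    _ = U * Matrix.diagonal (fun i => ((d i ^ r : ℝ) : ℂ)) * star U := by
        rw [key2, hUU, hW]
        rw [show V * (star V * U * Matrix.diagonal (fun i => ((d i ^ r : ℝ) : ℂ))) * star U * 1⁻¹ = (V * star V) * (U * Matrix.diagonal (fun i => ((d i ^ r : ℝ) : ℂ)) * star U) * 1⁻¹ by noncomm_ring, hVV]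
        simp



section BD
variable {X A : Type} [Fintype X] [DecidableEq X] [Fintype A] [DecidableEq A]

/-- Block diagonal matrix with block index first. -/
def bd (M : X → Matrix A A ℂ) : Matrix (X × A) (X × A) ℂ :=
  Matrix.of fun a b => if a.1 = b.1 then M a.1 a.2 b.2 else 0

lemma bd_apply (M : X → Matrix A A ℂ) (a b : X × A) :
    bd M a b = if a.1 = b.1 then M a.1 a.2 b.2 else 0 := rfl

lemma cqOp_eq_bd (p : X → ℝ) (K : X → Matrix A A ℂ) :
    cqOp p K = bd (fun x => (p x : ℂ) • K x) := by
  ext ⟨x, a⟩ ⟨y, b⟩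
  simp [cqOp, bd, Matrix.smul_apply, smul_eq_mul]

lemma bd_mul (M N : X → Matrix A A ℂ) : bd M * bd N = bd (fun x => M x * N x) := by
  ext ⟨x, a⟩ ⟨y, b⟩
  simp only [Matrix.mul_apply, bd_apply, Fintype.sum_prod_type]
  by_cases h : x = y
  · subst h
    simp only [if_pos rfl]
    rw [Finset.sum_eq_single x]
    · simp [Matrix.mul_apply]
    · intro z _ hz
      apply Finset.sum_eq_zero
      intro c _
      simp [Ne.symm hz]
    · simp
  · simp only [if_neg h]
    apply Finset.sum_eq_zero
    intro z _
    apply Finset.sum_eq_zero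
    intro c _
    by_cases hz : x = z
    · subst hz; simp [h]
    · simp [hz]

lemma bd_conjTranspose (M : X → Matrix A A ℂ) : (bd M)ᴴ = bd (fun x => (M x)ᴴ) := by
  ext ⟨x, a⟩ ⟨y, b⟩
  simp only [Matrix.conjTranspose_apply, bd_apply]
  by_cases h : x = y
  · subst h; simp
  · simp [h, Ne.symm h]

lemma bd_diagonal (d : X → A → ℝ) :
    bd (fun x => Matrix.diagonal (fun a => (d x a : ℂ))) =
      Matrix.diagonal (fun p : X × A => (d p.1 p.2 : ℂ)) := by
  ext ⟨x, a⟩ ⟨y, b⟩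
  by_cases h : x = y
  · subst h
    by_cases hab : a = b
    · subst hab; simp [bd_apply]
    · simp [bd_apply, Matrix.diagonal_apply, hab, Prod.ext_iff]
  · simp [bd_apply, h, Matrix.diagonal_apply, Prod.ext_iff]

lemma bd_one : bd (fun _ : X => (1 : Matrix A A ℂ)) = 1 := by
  have : (fun _ : X => (1 : Matrix A A ℂ)) = fun x => Matrix.diagonal (fun a => ((1 : ℝ) : ℂ)) := by
    funext x; simp [Matrix.diagonal_one]
  rw [this, bd_diagonal]
  simp [Matrix.diagonal_one]

lemma bd_trace (M : X → Matrix A A ℂ) : (bd M).trace = ∑ x, (M x).trace := by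
  simp only [Matrix.trace, Matrix.diag, bd_apply, Fintype.sum_prod_type]
  simp

lemma bd_unitary (M : X → Matrix A A ℂ) (hM : ∀ x, M x ∈ Matrix.unitaryGroup A ℂ) :
    bd M ∈ Matrix.unitaryGroup (X × A) ℂ := by
  rw [Matrix.mem_unitaryGroup_iff]
  rw [Matrix.star_eq_conjTranspose, bd_conjTranspose, bd_mul]
  rw [show (fun x => M x * (M x)ᴴ) = fun _ : X => (1 : Matrix A A ℂ) by
    funext x
    have := (Matrix.mem_unitaryGroup_iff).mp (hM x)
    rwa [Matrix.star_eq_conjTranspose] at this]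
  exact bd_one

end BD

section MatPowLemmas
variable {n : Type} [Fintype n] [DecidableEq n]

lemma smul_diagonal' (c : ℂ) {n : Type} [Fintype n] [DecidableEq n] (f : n → ℂ) :
    c • Matrix.diagonal f = Matrix.diagonal (fun i => c * f i) := by
  ext i j
  by_cases h : i = j <;> simp [Matrix.diagonal_apply, h]

lemma matPow_of_isHermitian {A : Matrix n n ℂ} (hA : A.IsHermitian) (r : ℝ) :
    matPow A r = (hA.eigenvectorUnitary : Matrix n n ℂ) *
      (Matrix.diagonal fun i => ((hA.eigenvalues i ^ r : ℝ) : ℂ)) *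
      (star (hA.eigenvectorUnitary : Matrix n n ℂ)) := dif_pos hA

lemma spectral {A : Matrix n n ℂ} (hA : A.IsHermitian) :
    A = (hA.eigenvectorUnitary : Matrix n n ℂ) *
      (Matrix.diagonal fun i => ((hA.eigenvalues i : ℝ) : ℂ)) *
      (star (hA.eigenvectorUnitary : Matrix n n ℂ)) := by
  exact hA.spectral_theorem

lemma matPow_smul {A : Matrix n n ℂ} (hA : A.PosSemidef) {q : ℝ} (hq : 0 ≤ q) (r : ℝ) :
    matPow ((q : ℂ) • A) r = ((q ^ r : ℝ) : ℂ) • matPow A r := by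
  have hAh := hA.1
  set V := (hAh.eigenvectorUnitary : Matrix n n ℂ) with hVdef
  have hdec : (q : ℂ) • A = V * Matrix.diagonal (fun i => ((q * hAh.eigenvalues i : ℝ) : ℂ)) * star V := by
    calc (q : ℂ) • A = (q : ℂ) • (V * (Matrix.diagonal fun i => ((hAh.eigenvalues i : ℝ) : ℂ)) * star V) := by
          rw [← spectral hAh]
      _ = V * ((q : ℂ) • Matrix.diagonal fun i => ((hAh.eigenvalues i : ℝ) : ℂ)) * star V := by
          rw [Matrix.mul_smul, Matrix.smul_mul]
      _ = _ := by
          rw [smul_diagonal']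
          congr 1
          congr 1
          funext i
          push_cast
          ring
  rw [matPow_eq_of_decomp _ V hAh.eigenvectorUnitary.2 _ hdec r]
  rw [matPow_of_isHermitian hAh r]
  have : (fun i => (((q * hAh.eigenvalues i) ^ r : ℝ) : ℂ)) =
      fun i => ((q ^ r : ℝ) : ℂ) * ((hAh.eigenvalues i ^ r : ℝ) : ℂ) := by
    funext i
    rw [Real.mul_rpow hq (hA.eigenvalues_nonneg i)]
    push_cast
    ring
  rw [this]
  rw [show Matrix.diagonal (fun i => ((q ^ r : ℝ) : ℂ) * ((hAh.eigenvalues i ^ r : ℝ) : ℂ)) =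
      ((q ^ r : ℝ) : ℂ) • Matrix.diagonal (fun i => ((hAh.eigenvalues i ^ r : ℝ) : ℂ)) from
    (smul_diagonal' _ _).symm]
  rw [Matrix.mul_smul, Matrix.smul_mul]

lemma matPow_posSemidef {A : Matrix n n ℂ} (hA : A.PosSemidef) (r : ℝ) :
    (matPow A r).PosSemidef := by
  rw [matPow_of_isHermitian hA.1 r]
  have hd : (Matrix.diagonal fun i => ((hA.1.eigenvalues i ^ r : ℝ) : ℂ)).PosSemidef := by
    rw [Matrix.posSemidef_diagonal_iff]
    intro i
    rw [Complex.zero_le_real]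
    exact Real.rpow_nonneg (hA.eigenvalues_nonneg i) r
  simpa [Matrix.star_eq_conjTranspose] using
    hd.mul_mul_conjTranspose_same (hA.1.eigenvectorUnitary : Matrix n n ℂ)

lemma trace_matPow {A : Matrix n n ℂ} (hA : A.IsHermitian) (r : ℝ) :
    (matPow A r).trace = ((∑ i, hA.eigenvalues i ^ r : ℝ) : ℂ) := by
  rw [matPow_of_isHermitian hA r, Matrix.trace_mul_cycle]
  rw [Matrix.mem_unitaryGroup_iff'.mp hA.eigenvectorUnitary.2, one_mul, Matrix.trace_diagonal]
  push_cast
  rfl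

lemma eq_zero_of_eigenvalues {A : Matrix n n ℂ} (hA : A.IsHermitian)
    (h : ∀ i, hA.eigenvalues i = 0) : A = 0 := by
  have := spectral hA
  rw [show (fun i => ((hA.eigenvalues i : ℝ) : ℂ)) = fun _ => (0 : ℂ) by
    funext i; rw [h i]; simp] at this
  simpa using this

end MatPowLemmas
section MoreLemmas
variable {n : Type} [Fintype n] [DecidableEq n]

lemma matPow_bd {X A : Type} [Fintype X] [DecidableEq X] [Fintype A] [DecidableEq A]
    {M : X → Matrix A A ℂ} (hM : ∀ x, (M x).IsHermitian) (r : ℝ) :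
    matPow (bd M) r = bd (fun x => matPow (M x) r) := by
  set V : X → Matrix A A ℂ := fun x => ((hM x).eigenvectorUnitary : Matrix A A ℂ) with hV
  have h1 : ∀ x, M x = V x * Matrix.diagonal (fun a => (((hM x).eigenvalues a : ℝ) : ℂ)) *
      (V x)ᴴ := fun x => by
    simpa [Matrix.star_eq_conjTranspose] using spectral (hM x)
  have hdec : bd M = bd V *
      Matrix.diagonal (fun p : X × A => (((hM p.1).eigenvalues p.2 : ℝ) : ℂ)) * star (bd V) := by
    calc bd M = bd (fun x => V x * Matrix.diagonal (fun a => (((hM x).eigenvalues a : ℝ) : ℂ)) *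
          (V x)ᴴ) := congrArg bd (funext fun x => h1 x)
      _ = bd V * bd (fun x => Matrix.diagonal (fun a => (((hM x).eigenvalues a : ℝ) : ℂ))) *
          bd (fun x => (V x)ᴴ) := by rw [bd_mul, bd_mul]
      _ = _ := by
          rw [bd_diagonal (fun x a => (hM x).eigenvalues a), Matrix.star_eq_conjTranspose,
            bd_conjTranspose]
  rw [matPow_eq_of_decomp _ (bd V)
    (bd_unitary V (fun x => (hM x).eigenvectorUnitary.2)) _ hdec r]
  calc bd V * Matrix.diagonal (fun p : X × A => (((hM p.1).eigenvalues p.2 ^ r : ℝ) : ℂ)) *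
        star (bd V)
      = bd V * bd (fun x => Matrix.diagonal (fun a => (((hM x).eigenvalues a ^ r : ℝ) : ℂ))) *
        bd (fun x => (V x)ᴴ) := by
        rw [bd_diagonal (fun x a => (hM x).eigenvalues a ^ r), Matrix.star_eq_conjTranspose,
          bd_conjTranspose]
    _ = bd (fun x => V x * Matrix.diagonal (fun a => (((hM x).eigenvalues a ^ r : ℝ) : ℂ)) *
        (V x)ᴴ) := by rw [bd_mul, bd_mul]
    _ = bd (fun x => matPow (M x) r) := by
        refine congrArg bd (funext fun x => ?_)
        rw [matPow_of_isHermitian (hM x) r, Matrix.star_eq_conjTranspose]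

lemma eq_zero_of_mulVec_zero {B : Matrix n n ℂ} (h : ∀ v, B.mulVec v = 0) : B = 0 := by
  ext i j
  have := congrFun (h (Pi.single j 1)) i
  simpa [Matrix.mulVec_single] using this

lemma kernel_proj {A B : Matrix n n ℂ} (hA : A.PosSemidef) (hB : B.IsHermitian)
    (hsupp : ∀ v, A.mulVec v = 0 → B.mulVec v = 0) {c : ℝ} (hc : c ≠ 0) :
    matPow A (-c) * (matPow A c * B * matPow A c) * matPow A (-c) = B := by
  have hAh := hA.1
  set V := (hAh.eigenvectorUnitary : Matrix n n ℂ) with hVdef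
  have hVV : V * star V = 1 := (Matrix.mem_unitaryGroup_iff).mp hAh.eigenvectorUnitary.2
  have hVV' : star V * V = 1 := (Matrix.mem_unitaryGroup_iff').mp hAh.eigenvectorUnitary.2
  set dind : n → ℂ := fun i => if hAh.eigenvalues i = 0 then 0 else 1 with hdind
  set P : Matrix n n ℂ := V * Matrix.diagonal dind * star V with hPdef
  have prod_pow : ∀ s t : ℝ, s ≠ 0 → s + t = 0 → matPow A s * matPow A t = P := by
    intro s t hs hst
    rw [matPow_of_isHermitian hAh s, matPow_of_isHermitian hAh t]
    calc (V * Matrix.diagonal (fun i => ((hAh.eigenvalues i ^ s : ℝ) : ℂ)) * star V) *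
          (V * Matrix.diagonal (fun i => ((hAh.eigenvalues i ^ t : ℝ) : ℂ)) * star V)
        = V * (Matrix.diagonal (fun i => ((hAh.eigenvalues i ^ s : ℝ) : ℂ)) * (star V * V) *
            Matrix.diagonal (fun i => ((hAh.eigenvalues i ^ t : ℝ) : ℂ))) * star V := by
          noncomm_ring
      _ = P := by
          rw [hVV', mul_one, Matrix.diagonal_mul_diagonal]
          have hfun : (fun i => ((hAh.eigenvalues i ^ s : ℝ) : ℂ) *
              ((hAh.eigenvalues i ^ t : ℝ) : ℂ)) = dind := by
            funext i
            simp only [hdind]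
            rcases eq_or_lt_of_le (hA.eigenvalues_nonneg i) with h0 | hpos
            · rw [← h0, Real.zero_rpow hs]
              simp
            · rw [if_neg (ne_of_gt hpos)]
              rw [← Complex.ofReal_mul, ← Real.rpow_add hpos, hst, Real.rpow_zero,
                Complex.ofReal_one]
          rw [hfun, hPdef]
  have hone : (1 : Matrix n n ℂ) = V * Matrix.diagonal (fun _ => (1 : ℂ)) * star V := by
    rw [Matrix.diagonal_one, mul_one, hVV]
  have hAP : A * (1 - P) = 0 := by
    rw [hone, hPdef]
    rw [spectral hAh]
    calc (V * Matrix.diagonal (fun i => ((hAh.eigenvalues i : ℝ) : ℂ)) * star V) *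
          (V * Matrix.diagonal (fun _ => (1 : ℂ)) * star V - V * Matrix.diagonal dind * star V)
        = V * (Matrix.diagonal (fun i => ((hAh.eigenvalues i : ℝ) : ℂ)) * (star V * V) *
            (Matrix.diagonal (fun _ => (1 : ℂ)) - Matrix.diagonal dind)) * star V := by
          noncomm_ring
      _ = 0 := by
          rw [hVV', mul_one, Matrix.diagonal_sub, Matrix.diagonal_mul_diagonal]
          have : (fun i => ((hAh.eigenvalues i : ℝ) : ℂ) * ((fun _ => (1:ℂ)) i - dind i)) =
              fun _ => (0 : ℂ) := by
            funext i
            rw [hdind]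
            by_cases h : hAh.eigenvalues i = 0
            · simp [h]
            · simp [h]
          rw [this]
          simp
  have hBP : B * (1 - P) = 0 := by
    apply eq_zero_of_mulVec_zero
    intro v
    have h1 : A.mulVec ((1 - P).mulVec v) = 0 := by
      rw [Matrix.mulVec_mulVec, hAP, Matrix.zero_mulVec]
    have h2 := hsupp _ h1
    rwa [Matrix.mulVec_mulVec] at h2
  have hBeqBP : B = B * P := by
    have h := hBP
    rw [mul_sub, mul_one, sub_eq_zero] at h
    exact h
  have hPherm : Pᴴ = P := by
    rw [hPdef, Matrix.conjTranspose_mul, Matrix.conjTranspose_mul,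
      Matrix.diagonal_conjTranspose]
    rw [Matrix.star_eq_conjTranspose, Matrix.conjTranspose_conjTranspose]
    rw [show star dind = dind by
      funext i
      rw [hdind]
      by_cases h : hAh.eigenvalues i = 0 <;> simp [h]]
    noncomm_ring
  have hPB : P * B = B := by
    calc P * B = Pᴴ * Bᴴ := by rw [hPherm, hB.eq]
      _ = (B * P)ᴴ := (Matrix.conjTranspose_mul B P).symm
      _ = Bᴴ := by rw [← hBeqBP]
      _ = B := hB.eq
  have hcc : (-c) + c = 0 := by ring
  have hcc' : c + (-c) = 0 := by ring
  calc matPow A (-c) * (matPow A c * B * matPow A c) * matPow A (-c)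
      = (matPow A (-c) * matPow A c) * B * (matPow A c * matPow A (-c)) := by noncomm_ring
    _ = P * B * P := by rw [prod_pow _ _ (neg_ne_zero.mpr hc) hcc, prod_pow _ _ hc hcc']
    _ = B := by rw [hPB, ← hBeqBP]

lemma trace_matPow_re_nonneg {M : Matrix n n ℂ} (hM : M.PosSemidef) (r : ℝ) :
    0 ≤ ((matPow M r).trace).re := by
  rw [trace_matPow hM.1 r, Complex.ofReal_re]
  exact Finset.sum_nonneg fun i _ => Real.rpow_nonneg (hM.eigenvalues_nonneg i) r

lemma trace_matPow_re_pos {M : Matrix n n ℂ} (hM : M.PosSemidef) (hMne : M ≠ 0)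
    {r : ℝ} (hr : 0 < r) : 0 < ((matPow M r).trace).re := by
  rw [trace_matPow hM.1 r, Complex.ofReal_re]
  have hex : ∃ i, hM.1.eigenvalues i ≠ 0 := by
    by_contra h
    push_neg at h
    exact hMne (eq_zero_of_eigenvalues hM.1 h)
  obtain ⟨i, hi⟩ := hex
  have hipos : 0 < hM.1.eigenvalues i := lt_of_le_of_ne (hM.eigenvalues_nonneg i) (Ne.symm hi)
  apply Finset.sum_pos'
  · exact fun j _ => Real.rpow_nonneg (hM.eigenvalues_nonneg j) r
  · exact ⟨i, Finset.mem_univ i, Real.rpow_pos_of_pos hipos r⟩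

lemma posSemidef_real_smul {A : Matrix n n ℂ} (hA : A.PosSemidef) {q : ℝ} (hq : 0 ≤ q) :
    ((q : ℂ) • A).PosSemidef := by
  constructor
  · unfold Matrix.IsHermitian
    rw [Matrix.conjTranspose_smul, hA.1.eq]
    congr 1
    simp [Complex.star_def, Complex.conj_ofReal]
  · exact (hA.smul (a := (q : ℂ)) (by exact_mod_cast hq)).2

lemma bd_mulVec_embed {X A : Type} [Fintype X] [DecidableEq X] [Fintype A] [DecidableEq A]
    (M : X → Matrix A A ℂ) (x : X) (w : A → ℂ) :
    (bd M).mulVec (fun za : X × A => if za.1 = x then w za.2 else 0) =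
      fun yb : X × A => if yb.1 = x then ((M yb.1).mulVec w) yb.2 else 0 := by
  funext yb
  rcases yb with ⟨y, b⟩
  simp only [Matrix.mulVec, dotProduct, Fintype.sum_prod_type, bd_apply]
  by_cases h : y = x
  · subst h
    simp only [if_pos rfl]
    rw [Finset.sum_eq_single y]
    · simp
    · intro z _ hz
      apply Finset.sum_eq_zero
      intro a _
      simp [Ne.symm hz]
    · simp
  · simp only [if_neg h]
    apply Finset.sum_eq_zero
    intro z _
    apply Finset.sum_eq_zero
    intro a _
    by_cases hz : y = z
    · subst hz
      simp [h]
    · simp [hz]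

lemma ereal_coe_sum {ι : Type} (s : Finset ι) (f : ι → ℝ) :
    ((∑ i ∈ s, f i : ℝ) : EReal) = ∑ i ∈ s, ((f i : ℝ) : EReal) := by
  induction s using Finset.cons_induction with
  | empty => simp
  | cons a s ha ih => rw [Finset.sum_cons, Finset.sum_cons, EReal.coe_add, ih]

end MoreLemmas


end AuxSpectral

/-- Direct-sum inequality for the sandwiched Rényi relative entropy:
for every `α > 1` and classical–quantum `κ`, `λ`,
`D̃_α(κ‖λ) ≥ D(p‖q) + ∑ x p(x) D̃_α(κ_x‖λ_x)`. -/
theorem sandRenyi_directSum {X A : Type} [Fintype X] [DecidableEq X] [Fintype A] [DecidableEq A]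
    (α : ℝ) (hα : 1 < α)
    (p q : X → ℝ) (κ lam : X → Matrix A A ℂ)
    (hp : IsProb p) (hκ : ∀ x, IsState (κ x))
    (hq : ∀ x, 0 ≤ q x) (hlam : ∀ x, (lam x).PosSemidef) :
    sandRenyi α (cqOp p κ) (cqOp q lam) ≥
      cRelEnt p q + ∑ x, (p x : EReal) * sandRenyi α (κ x) (lam x) := by
  classical
  rw [ge_iff_le]
  by_cases hss : SuppSubset (cqOp p κ) (cqOp q lam)
  swap
  · rw [sandRenyi, if_neg (by
      rintro (⟨h1, h2⟩ | ⟨h1, h2⟩)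
      · linarith
      · exact hss h2)]
    exact le_top
  -- scalars
  have hαpos : 0 < α := by linarith
  have hαne : α ≠ 0 := ne_of_gt hαpos
  have hα1 : (0:ℝ) < α - 1 := by linarith
  have hα1ne : α - 1 ≠ 0 := ne_of_gt hα1
  set c : ℝ := (1 - α) / (2 * α) with hc
  have hcneg : c < 0 := by
    rw [hc]
    apply div_neg_of_neg_of_pos <;> linarith
  have hcne : c ≠ 0 := ne_of_lt hcneg
  -- block supp facts
  have hκne : ∀ x, κ x ≠ 0 := by
    intro x h
    have := (hκ x).2
    rw [h, Matrix.trace_zero] at this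
    exact zero_ne_one this
  have hblock : ∀ x (w : A → ℂ), ((q x : ℂ) • lam x).mulVec w = 0 →
      ((p x : ℂ) • κ x).mulVec w = 0 := by
    intro x w hw
    have h1 : (cqOp q lam).mulVec (fun za : X × A => if za.1 = x then w za.2 else 0) = 0 := by
      rw [cqOp_eq_bd, bd_mulVec_embed]
      funext yb
      rcases yb with ⟨y, b⟩
      by_cases h : y = x
      · subst h
        simpa using congrFun hw b
      · simp [h]
    have h2 := hss _ h1
    rw [cqOp_eq_bd, bd_mulVec_embed] at h2
    funext b
    simpa using congrFun h2 (x, b)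
  have hq_ne : ∀ x, p x ≠ 0 → q x ≠ 0 := by
    intro x hpx hqx
    have h0 : ((p x : ℂ) • κ x) = 0 := by
      apply eq_zero_of_mulVec_zero
      intro w
      apply hblock
      rw [hqx]
      simp
    rcases smul_eq_zero.mp h0 with h | h
    · exact hpx (by exact_mod_cast h)
    · exact hκne x h
  have hsuppx : ∀ x, p x ≠ 0 → SuppSubset (κ x) (lam x) := by
    intro x hpx w hw
    have h1 : ((q x : ℂ) • lam x).mulVec w = 0 := by
      rw [Matrix.smul_mulVec, hw, smul_zero]
    have h2 := hblock x w h1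
    rw [Matrix.smul_mulVec] at h2
    rcases smul_eq_zero.mp h2 with h | h
    · exact absurd (by exact_mod_cast h) hpx
    · exact h
  -- blocks
  set L : X → Matrix A A ℂ := fun x => matPow (lam x) c with hL
  set Mx : X → Matrix A A ℂ := fun x => L x * κ x * L x with hMx
  have hLps : ∀ x, (L x).PosSemidef := fun x => matPow_posSemidef (hlam x) c
  have hMps : ∀ x, (Mx x).PosSemidef := by
    intro x
    have h := (hκ x).1.conjTranspose_mul_mul_same (L x)
    rwa [(hLps x).1.eq] at h
  set T : X → ℝ := fun x => ((matPow (Mx x) α).trace).re with hT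
  have hTnn : ∀ x, 0 ≤ T x := fun x => trace_matPow_re_nonneg (hMps x) α
  have hTpos : ∀ x, p x ≠ 0 → 0 < T x := by
    intro x hpx
    apply trace_matPow_re_pos (hMps x) _ hαpos
    intro h0
    have hk := kernel_proj (hlam x) (hκ x).1.1 (hsuppx x hpx) hcne
    have he : matPow (lam x) c * κ x * matPow (lam x) c = Mx x := rfl
    rw [he, h0] at hk
    apply hκne x
    rw [← hk]
    simp
  -- scalars per block
  have hscnn : ∀ x, 0 ≤ q x ^ c * p x * q x ^ c := fun x =>
    mul_nonneg (mul_nonneg (Real.rpow_nonneg (hq x) c) (hp.1 x)) (Real.rpow_nonneg (hq x) c)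
  have htr : ((matPow (matPow (cqOp q lam) c * cqOp p κ * matPow (cqOp q lam) c) α).trace).re
      = ∑ x, (q x ^ c * p x * q x ^ c) ^ α * T x := by
    rw [cqOp_eq_bd q lam, cqOp_eq_bd p κ]
    rw [matPow_bd (fun x => (posSemidef_real_smul (hlam x) (hq x)).1) c]
    rw [show (fun x => matPow ((q x : ℂ) • lam x) c) =
        (fun x => ((q x ^ c : ℝ) : ℂ) • L x) from
      funext fun x => matPow_smul (hlam x) (hq x) c]
    rw [bd_mul, bd_mul]
    rw [show (fun x => ((q x ^ c : ℝ) : ℂ) • L x * ((p x : ℂ) • κ x) *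
          (((q x ^ c : ℝ) : ℂ) • L x)) =
        (fun x => ((q x ^ c * p x * q x ^ c : ℝ) : ℂ) • Mx x) from
      funext fun x => by
        simp only [smul_mul_assoc, mul_smul_comm, smul_smul]
        congr 1
        simp only [Complex.ofReal_mul]
        ring]
    rw [matPow_bd (fun x => (posSemidef_real_smul (hMps x) (hscnn x)).1) α]
    rw [show (fun x => matPow (((q x ^ c * p x * q x ^ c : ℝ) : ℂ) • Mx x) α) =
        (fun x => (((q x ^ c * p x * q x ^ c) ^ α : ℝ) : ℂ) • matPow (Mx x) α) from
      funext fun x => matPow_smul (hMps x) (hscnn x) α]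
    rw [bd_trace]
    simp only [Matrix.trace_smul, smul_eq_mul, Complex.re_sum, Complex.re_ofReal_mul]
    rfl
  have hx0 : ∃ x, p x ≠ 0 := by
    by_contra h
    push_neg at h
    have h2 := hp.2
    rw [Finset.sum_eq_zero (fun x _ => h x)] at h2
    exact zero_ne_one h2
  have hTotpos : 0 < ∑ x, (q x ^ c * p x * q x ^ c) ^ α * T x := by
    obtain ⟨x₀, hx₀⟩ := hx0
    apply Finset.sum_pos'
      (fun x _ => mul_nonneg (Real.rpow_nonneg (hscnn x) α) (hTnn x))
    refine ⟨x₀, Finset.mem_univ _, ?_⟩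
    have hqx : 0 < q x₀ := lt_of_le_of_ne (hq x₀) (Ne.symm (hq_ne x₀ hx₀))
    have hpx : 0 < p x₀ := lt_of_le_of_ne (hp.1 x₀) (Ne.symm hx₀)
    have hsc0 : 0 < q x₀ ^ c * p x₀ * q x₀ ^ c :=
      mul_pos (mul_pos (Real.rpow_pos_of_pos hqx c) hpx) (Real.rpow_pos_of_pos hqx c)
    exact mul_pos (Real.rpow_pos_of_pos hsc0 α) (hTpos x₀ hx₀)
  have hLHS : sandRenyi α (cqOp p κ) (cqOp q lam) =
      (((α - 1)⁻¹ * Real.logb 2 (∑ x, (q x ^ c * p x * q x ^ c) ^ α * T x) : ℝ) : EReal) := by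
    rw [sandRenyi, if_pos (Or.inr ⟨hα, hss⟩), ← hc, htr,
      elog2, if_neg (not_le.mpr hTotpos), ← EReal.coe_mul]
  have hSx : ∀ x, p x ≠ 0 → sandRenyi α (κ x) (lam x) =
      (((α - 1)⁻¹ * Real.logb 2 (T x) : ℝ) : EReal) := by
    intro x hpx
    rw [sandRenyi, if_pos (Or.inr ⟨hα, hsuppx x hpx⟩), ← hc]
    rw [show matPow (lam x) c * κ x * matPow (lam x) c = Mx x from rfl]
    rw [show ((matPow (Mx x) α).trace).re = T x from rfl]
    rw [elog2, if_neg (not_le.mpr (hTpos x hpx)), ← EReal.coe_mul]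
  have hD : cRelEnt p q = ((∑ x, p x * Real.logb 2 (p x / q x) : ℝ) : EReal) := by
    rw [cRelEnt, if_pos hq_ne]
  have hRHS : ∑ x, (p x : EReal) * sandRenyi α (κ x) (lam x) =
      ((∑ x, (if p x = 0 then 0 else p x * ((α - 1)⁻¹ * Real.logb 2 (T x))) : ℝ) : EReal) := by
    rw [ereal_coe_sum]
    apply Finset.sum_congr rfl
    intro x _
    by_cases hpx : p x = 0
    · rw [hpx]
      simp [hpx]
    · rw [hSx x hpx, ← EReal.coe_mul]
      congr 1
      simp [hpx]
  rw [hLHS, hD, hRHS, ← EReal.coe_add, EReal.coe_le_coe_iff]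
  -- now a purely real inequality
  have hmem : ∀ x ∈ Finset.univ.filter (fun x => p x ≠ 0), p x ≠ 0 :=
    fun x hx => (Finset.mem_filter.mp hx).2
  have hppos : ∀ x ∈ Finset.univ.filter (fun x => p x ≠ 0), 0 < p x := fun x hx =>
    lt_of_le_of_ne (hp.1 x) (Ne.symm (hmem x hx))
  have hqpos : ∀ x ∈ Finset.univ.filter (fun x => p x ≠ 0), 0 < q x := fun x hx =>
    lt_of_le_of_ne (hq x) (Ne.symm (hq_ne x (hmem x hx)))
  have hsum1 : ∑ x ∈ Finset.univ.filter (fun x => p x ≠ 0), p x = 1 := by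
    rw [Finset.sum_filter_of_ne (fun x _ h => h)]
    exact hp.2
  have hypos : ∀ x ∈ Finset.univ.filter (fun x => p x ≠ 0),
      0 < p x ^ (α - 1) * q x ^ (1 - α) * T x := fun x hx =>
    mul_pos (mul_pos (Real.rpow_pos_of_pos (hppos x hx) _)
      (Real.rpow_pos_of_pos (hqpos x hx) _)) (hTpos x (hmem x hx))
  have h2ca : 2 * c * α = 1 - α := by
    rw [hc]
    field_simp
  have hterm : ∀ x ∈ Finset.univ.filter (fun x => p x ≠ 0),
      (q x ^ c * p x * q x ^ c) ^ α * T x =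
        p x * (p x ^ (α - 1) * q x ^ (1 - α) * T x) := by
    intro x hx
    have hqx := hqpos x hx
    have hpx := hppos x hx
    have e1 : q x ^ c * p x * q x ^ c = p x * q x ^ (2 * c) := by
      have e2 : q x ^ c * p x * q x ^ c = p x * (q x ^ c * q x ^ c) := by ring
      rw [e2, ← Real.rpow_add hqx]
      ring_nf
    have e3 : (q x ^ c * p x * q x ^ c) ^ α = p x ^ α * q x ^ (1 - α) := by
      rw [e1, Real.mul_rpow (le_of_lt hpx) (Real.rpow_nonneg (hq x) _),
        ← Real.rpow_mul (hq x), h2ca]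
    have e4 : p x ^ α = p x * p x ^ (α - 1) := by
      have e5 := Real.rpow_add hpx 1 (α - 1)
      rw [show (1 : ℝ) + (α - 1) = α by ring, Real.rpow_one] at e5
      exact e5
    rw [e3, e4]
    ring
  have hTotS : ∑ x, (q x ^ c * p x * q x ^ c) ^ α * T x =
      ∑ x ∈ Finset.univ.filter (fun x => p x ≠ 0),
        p x * (p x ^ (α - 1) * q x ^ (1 - α) * T x) := by
    rw [← Finset.sum_filter_of_ne
      (p := fun x => p x ≠ 0) (f := fun x => (q x ^ c * p x * q x ^ c) ^ α * T x)
      (fun x _ hne hp0 => hne (by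
        show (q x ^ c * p x * q x ^ c) ^ α * T x = 0
        rw [show q x ^ c * p x * q x ^ c = 0 by rw [hp0]; ring,
          Real.zero_rpow hαne, zero_mul]))]
    exact Finset.sum_congr rfl hterm
  have hjen := (strictConcaveOn_log_Ioi.concaveOn).le_map_sum
    (t := Finset.univ.filter (fun x => p x ≠ 0))
    (fun x hx => le_of_lt (hppos x hx)) hsum1 (fun x hx => hypos x hx)
  simp only [smul_eq_mul, Function.comp] at hjen
  have hlogy : ∀ x ∈ Finset.univ.filter (fun x => p x ≠ 0),
      Real.log (p x ^ (α - 1) * q x ^ (1 - α) * T x) =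
      (α - 1) * Real.log (p x / q x) + Real.log (T x) := by
    intro x hx
    have hpx := hppos x hx
    have hqx := hqpos x hx
    rw [Real.log_mul (ne_of_gt (mul_pos (Real.rpow_pos_of_pos hpx _)
        (Real.rpow_pos_of_pos hqx _))) (ne_of_gt (hTpos x (hmem x hx)))]
    rw [Real.log_mul (ne_of_gt (Real.rpow_pos_of_pos hpx _))
        (ne_of_gt (Real.rpow_pos_of_pos hqx _))]
    rw [Real.log_rpow hpx, Real.log_rpow hqx, Real.log_div (ne_of_gt hpx) (ne_of_gt hqx)]
    ring
  have key : ∑ x ∈ Finset.univ.filter (fun x => p x ≠ 0),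
      p x * ((α - 1) * Real.log (p x / q x) + Real.log (T x)) ≤
      Real.log (∑ x, (q x ^ c * p x * q x ^ c) ^ α * T x) := by
    rw [hTotS]
    refine le_trans (le_of_eq (Finset.sum_congr rfl fun x hx => by rw [← hlogy x hx])) hjen
  have hl2 : 0 < Real.log 2 := Real.log_pos one_lt_two
  have hden : 0 < (α - 1) * Real.log 2 := mul_pos hα1 hl2
  have hD2S : ∑ x, p x * Real.logb 2 (p x / q x) =
      ∑ x ∈ Finset.univ.filter (fun x => p x ≠ 0), p x * Real.logb 2 (p x / q x) := by
    exact (Finset.sum_filter_of_ne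
      (p := fun x => p x ≠ 0) (f := fun x => p x * Real.logb 2 (p x / q x))
      (fun x _ hne hp0 => hne (by simp [hp0]))).symm
  have hg2S : ∑ x, (if p x = 0 then 0 else p x * ((α - 1)⁻¹ * Real.logb 2 (T x))) =
      ∑ x ∈ Finset.univ.filter (fun x => p x ≠ 0),
        p x * ((α - 1)⁻¹ * Real.logb 2 (T x)) := by
    rw [← Finset.sum_filter_of_ne
      (p := fun x => p x ≠ 0)
      (f := fun x => if p x = 0 then 0 else p x * ((α - 1)⁻¹ * Real.logb 2 (T x)))
      (fun x _ hne hp0 => hne (by simp [hp0]))]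
    exact Finset.sum_congr rfl fun x hx => by simp [(Finset.mem_filter.mp hx).2]
  rw [hD2S, hg2S]
  calc ∑ x ∈ Finset.univ.filter (fun x => p x ≠ 0), p x * Real.logb 2 (p x / q x) +
        ∑ x ∈ Finset.univ.filter (fun x => p x ≠ 0),
          p x * ((α - 1)⁻¹ * Real.logb 2 (T x))
      = (∑ x ∈ Finset.univ.filter (fun x => p x ≠ 0),
          p x * ((α - 1) * Real.log (p x / q x) + Real.log (T x))) /
          ((α - 1) * Real.log 2) := by
        rw [Finset.sum_div, ← Finset.sum_add_distrib]
        apply Finset.sum_congr rfl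
        intro x hx
        simp only [Real.logb]
        field_simp
    _ ≤ Real.log (∑ x, (q x ^ c * p x * q x ^ c) ^ α * T x) / ((α - 1) * Real.log 2) := by
        gcongr
    _ = (α - 1)⁻¹ * Real.logb 2 (∑ x, (q x ^ c * p x * q x ^ c) ^ α * T x) := by
        simp only [Real.logb]
        field_simp

end RainsPaper
end

section
/- Direct-sum inequality for the Petz Rényi relative entropy: for every α > 1 and classical–quantum operators κ = ∑_x p(x)|x⟩⟨x|⊗κ_x (a state) and λ = ∑_x q(x)|x⟩⟨x|⊗λ_x (positive semidefinite), one has D_α(κ‖λ) ≥ D(p‖q) + ∑_x p(x) D_α(κ_x‖λ_x). -/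
open scoped Matrix Classical ComplexOrder

namespace RainsPaper

open Matrix in
lemma conj_diag_unique {n : Type} [Fintype n] [DecidableEq n]
    (U V : Matrix n n ℂ) (hU : U ∈ Matrix.unitaryGroup n ℂ)
    (hV : V ∈ Matrix.unitaryGroup n ℂ) (d e : n → ℂ) (f : ℂ → ℂ)
    (h : U * Matrix.diagonal d * star U = V * Matrix.diagonal e * star V) :
    U * Matrix.diagonal (fun i => f (d i)) * star U
      = V * Matrix.diagonal (fun i => f (e i)) * star V := by
  obtain ⟨hU1, hU2⟩ := Unitary.mem_iff.mp hU
  obtain ⟨hV1, hV2⟩ := Unitary.mem_iff.mp hV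
  set W := star V * U with hW
  have hWd : W * Matrix.diagonal d = Matrix.diagonal e * W := by
    calc W * Matrix.diagonal d = star V * (U * Matrix.diagonal d * star U) * U := by
          rw [hW]; simp only [Matrix.mul_assoc]; rw [hU1, Matrix.mul_one]
      _ = star V * (V * Matrix.diagonal e * star V) * U := by rw [h]
      _ = Matrix.diagonal e * W := by
          rw [hW]; simp only [← Matrix.mul_assoc]; rw [hV1, Matrix.one_mul]
  have hWf : W * Matrix.diagonal (fun i => f (d i)) = Matrix.diagonal (fun i => f (e i)) * W := by
    ext i j
    have hij := congrFun (congrFun hWd i) j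
    simp only [Matrix.mul_diagonal, Matrix.diagonal_mul] at hij ⊢
    by_cases hw : W i j = 0
    · simp [hw]
    · have : d j = e i := by
        have := hij
        rw [mul_comm (e i) (W i j)] at this
        exact mul_left_cancel₀ hw this
      rw [this, mul_comm]
  have hVW : V * W = U := by rw [hW, ← Matrix.mul_assoc, hV2, Matrix.one_mul]
  have hWW : W * star W = 1 := by
    rw [hW, StarMul.star_mul, star_star, Matrix.mul_assoc, ← Matrix.mul_assoc U,
      hU2, Matrix.one_mul, hV1]
  calc U * Matrix.diagonal (fun i => f (d i)) * star U
      = V * (W * Matrix.diagonal (fun i => f (d i))) * star U := by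
        rw [← Matrix.mul_assoc, hVW]
    _ = V * Matrix.diagonal (fun i => f (e i)) * (W * star U) := by
        rw [hWf]; simp only [Matrix.mul_assoc]
    _ = V * Matrix.diagonal (fun i => f (e i)) * star V := by
        congr 1
        rw [hW, Matrix.mul_assoc, hU2, Matrix.mul_one]

open Matrix in
lemma matPow_of_decomp {n : Type} [Fintype n] [DecidableEq n]
    (A U : Matrix n n ℂ) (hU : U ∈ Matrix.unitaryGroup n ℂ) (d : n → ℝ)
    (hdec : A = U * Matrix.diagonal (fun i => (d i : ℂ)) * star U) (r : ℝ) :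
    matPow A r = U * Matrix.diagonal (fun i => ((d i ^ r : ℝ) : ℂ)) * star U := by
  have hA : A.IsHermitian := by
    rw [hdec]
    rw [Matrix.star_eq_conjTranspose]
    apply Matrix.isHermitian_mul_mul_conjTranspose
    rw [Matrix.IsHermitian, Matrix.diagonal_conjTranspose]
    exact congrArg Matrix.diagonal (funext fun i => Complex.conj_ofReal (d i))
  rw [matPow, dif_pos hA]
  have hspec : (hA.eigenvectorUnitary : Matrix n n ℂ) *
      Matrix.diagonal (fun i => ((hA.eigenvalues i : ℝ) : ℂ)) *
      star (hA.eigenvectorUnitary : Matrix n n ℂ)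
      = U * Matrix.diagonal (fun i => (d i : ℂ)) * star U := by
    rw [← hdec]
    conv_rhs => rw [hA.spectral_theorem]
    rfl
  have key := conj_diag_unique (hA.eigenvectorUnitary : Matrix n n ℂ) U
    hA.eigenvectorUnitary.2 hU _ _ (fun z => ((z.re ^ r : ℝ) : ℂ)) hspec
  simpa only [Complex.ofReal_re] using key

/-- Block-diagonal matrix built from a family of blocks. -/
noncomputable def bdiag {X A : Type} [DecidableEq X] (U : X → Matrix A A ℂ) :
    Matrix (X × A) (X × A) ℂ :=
  Matrix.of fun p q => if p.1 = q.1 then U p.1 p.2 q.2 else 0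

lemma bdiag_mul {X A : Type} [Fintype X] [DecidableEq X] [Fintype A]
    (U V : X → Matrix A A ℂ) : bdiag U * bdiag V = bdiag (fun x => U x * V x) := by
  ext ⟨x, a⟩ ⟨y, b⟩
  simp only [bdiag, Matrix.mul_apply, Matrix.of_apply, Fintype.sum_prod_type]
  by_cases hxy : x = y
  · subst hxy
    simp only [if_pos rfl]
    rw [Finset.sum_eq_single x]
    · simp
    · intro z _ hz
      simp [Ne.symm hz]
    · simp
  · rw [if_neg hxy, Finset.sum_eq_zero]
    intro z _
    by_cases hz : x = z
    · subst hz
      simp [hxy]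
    · simp [hz]

lemma bdiag_star {X A : Type} [Fintype X] [DecidableEq X] [Fintype A]
    (U : X → Matrix A A ℂ) : star (bdiag U) = bdiag (fun x => star (U x)) := by
  ext ⟨x, a⟩ ⟨y, b⟩
  simp only [Matrix.star_apply, bdiag, Matrix.of_apply]
  by_cases hxy : x = y
  · subst hxy; simp [Matrix.star_apply]
  · simp [hxy, Ne.symm hxy]

lemma bdiag_one {X A : Type} [Fintype X] [DecidableEq X] [Fintype A] [DecidableEq A] :
    bdiag (fun _ : X => (1 : Matrix A A ℂ)) = 1 := by
  ext ⟨x, a⟩ ⟨y, b⟩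
  simp only [bdiag, Matrix.of_apply, Matrix.one_apply, Prod.mk.injEq, Prod.ext_iff]
  by_cases hxy : x = y <;> by_cases hab : a = b <;> simp [hxy, hab]

lemma bdiag_mem {X A : Type} [Fintype X] [DecidableEq X] [Fintype A] [DecidableEq A]
    (U : X → Matrix A A ℂ) (hU : ∀ x, U x ∈ Matrix.unitaryGroup A ℂ) :
    bdiag U ∈ Matrix.unitaryGroup (X × A) ℂ := by
  rw [Matrix.mem_unitaryGroup_iff]
  rw [bdiag_star, bdiag_mul, ← bdiag_one (X := X) (A := A)]
  exact congrArg bdiag (funext fun x => Matrix.mem_unitaryGroup_iff.mp (hU x))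

lemma diagonal_prod {X A : Type} [Fintype X] [DecidableEq X] [Fintype A] [DecidableEq A]
    (g : X × A → ℂ) :
    Matrix.diagonal g = bdiag (fun x => Matrix.diagonal (fun a => g (x, a))) := by
  ext ⟨x, a⟩ ⟨y, b⟩
  simp only [Matrix.diagonal_apply, bdiag, Matrix.of_apply, Prod.ext_iff]
  by_cases hxy : x = y <;> by_cases hab : a = b <;> simp [hxy, hab]

lemma matPow_of_hermitian {n : Type} [Fintype n] [DecidableEq n] {A : Matrix n n ℂ}
    (hA : A.IsHermitian) (r : ℝ) :
    matPow A r = (hA.eigenvectorUnitary : Matrix n n ℂ) *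
      (Matrix.diagonal fun i => ((hA.eigenvalues i ^ r : ℝ) : ℂ)) *
      (star (hA.eigenvectorUnitary : Matrix n n ℂ)) := dif_pos hA

lemma cqOp_eq_bdiag {X A : Type} [Fintype X] [DecidableEq X] [Fintype A] [DecidableEq A]
    (p : X → ℝ) (K : X → Matrix A A ℂ) :
    cqOp p K = bdiag (fun x => (p x : ℂ) • K x) := by
  ext ⟨x, a⟩ ⟨y, b⟩
  simp only [cqOp, bdiag, Matrix.of_apply, Matrix.smul_apply, smul_eq_mul]

lemma smul_conj_diag {A : Type} [Fintype A] [DecidableEq A] (c : ℝ)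
    (U : Matrix A A ℂ) (v : A → ℝ) :
    (c : ℂ) • (U * Matrix.diagonal (fun a => (v a : ℂ)) * star U)
      = U * Matrix.diagonal (fun a => ((c * v a : ℝ) : ℂ)) * star U := by
  rw [← smul_mul_assoc, ← mul_smul_comm, ← Matrix.diagonal_smul]
  refine congrArg (· * star U) (congrArg (U * ·) (congrArg Matrix.diagonal (funext fun a => ?_)))
  simp only [Pi.smul_apply, smul_eq_mul]
  push_cast
  ring

lemma matPow_cqOp {X A : Type} [Fintype X] [DecidableEq X] [Fintype A] [DecidableEq A]
    (p : X → ℝ) (hp : ∀ x, 0 ≤ p x) (K : X → Matrix A A ℂ)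
    (hK : ∀ x, (K x).PosSemidef) (r : ℝ) :
    matPow (cqOp p K) r = cqOp (fun x => p x ^ r) (fun x => matPow (K x) r) := by
  have hev : ∀ x a, 0 ≤ (hK x).1.eigenvalues a := fun x a => (hK x).eigenvalues_nonneg a
  have hdec : cqOp p K =
      bdiag (fun x => ((hK x).1.eigenvectorUnitary : Matrix A A ℂ)) *
        Matrix.diagonal (fun i : X × A => ((p i.1 * (hK i.1).1.eigenvalues i.2 : ℝ) : ℂ)) *
        star (bdiag (fun x => ((hK x).1.eigenvectorUnitary : Matrix A A ℂ))) := by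
    rw [diagonal_prod, bdiag_star, bdiag_mul, bdiag_mul, cqOp_eq_bdiag]
    refine congrArg bdiag (funext fun x => ?_)
    have := smul_conj_diag (p x) ((hK x).1.eigenvectorUnitary : Matrix A A ℂ)
      ((hK x).1.eigenvalues)
    rw [← this]
    congr 1
    conv_lhs => rw [(hK x).1.spectral_theorem]
    rfl
  have key := matPow_of_decomp (cqOp p K) _ (bdiag_mem _ (fun x => ((hK x).1.eigenvectorUnitary).2))
    (fun i : X × A => p i.1 * (hK i.1).1.eigenvalues i.2) hdec r
  rw [key, diagonal_prod, bdiag_star, bdiag_mul, bdiag_mul, cqOp_eq_bdiag]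
  refine congrArg bdiag (funext fun x => ?_)
  have hpow : ∀ a : A, ((p x * (hK x).1.eigenvalues a) ^ r : ℝ)
      = p x ^ r * ((hK x).1.eigenvalues a ^ r) := fun a => Real.mul_rpow (hp x) (hev x a)
  calc ((hK x).1.eigenvectorUnitary : Matrix A A ℂ) *
        Matrix.diagonal (fun a => (((p x * (hK x).1.eigenvalues a) ^ r : ℝ) : ℂ)) *
        star ((hK x).1.eigenvectorUnitary : Matrix A A ℂ)
      = ((hK x).1.eigenvectorUnitary : Matrix A A ℂ) *
        Matrix.diagonal (fun a => ((p x ^ r * ((hK x).1.eigenvalues a ^ r) : ℝ) : ℂ)) *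
        star ((hK x).1.eigenvectorUnitary : Matrix A A ℂ) := by
        congr 1
        congr 1
        exact congrArg Matrix.diagonal (funext fun a => by rw [hpow a])
    _ = ((p x ^ r : ℝ) : ℂ) • matPow (K x) r := by
        rw [matPow_of_hermitian (hK x).1 r]
        exact (smul_conj_diag _ _ _).symm

lemma trace_bdiag {X A : Type} [Fintype X] [DecidableEq X] [Fintype A]
    (M : X → Matrix A A ℂ) : (bdiag M).trace = ∑ x, (M x).trace := by
  simp [Matrix.trace, Matrix.diag, bdiag, Fintype.sum_prod_type]

lemma trace_cqOp_mul {X A : Type} [Fintype X] [DecidableEq X] [Fintype A] [DecidableEq A]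
    (P Q : X → ℝ) (K L : X → Matrix A A ℂ) :
    (cqOp P K * cqOp Q L).trace = ∑ x, ((P x * Q x : ℝ) : ℂ) * (K x * L x).trace := by
  rw [cqOp_eq_bdiag, cqOp_eq_bdiag, bdiag_mul, trace_bdiag]
  refine Finset.sum_congr rfl fun x _ => ?_
  rw [smul_mul_smul_comm, Matrix.trace_smul, smul_eq_mul]
  push_cast
  ring

lemma trace_diagonal_mul' {n : Type} [Fintype n] [DecidableEq n] (d : n → ℂ)
    (M : Matrix n n ℂ) : (Matrix.diagonal d * M).trace = ∑ i, d i * M i i := by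
  simp [Matrix.trace, Matrix.diag, Matrix.diagonal_mul]

lemma trace_conj_mul_conj {n : Type} [Fintype n] [DecidableEq n]
    (U V : Matrix n n ℂ) (d e : n → ℝ) :
    (U * Matrix.diagonal (fun i => (d i : ℂ)) * star U *
      (V * Matrix.diagonal (fun i => (e i : ℂ)) * star V)).trace
      = ((∑ i, ∑ j, d i * e j * Complex.normSq ((star V * U) j i) : ℝ) : ℂ) := by
  set W : Matrix n n ℂ := star V * U with hW
  set D : Matrix n n ℂ := Matrix.diagonal (fun i => (d i : ℂ)) with hD
  set E : Matrix n n ℂ := Matrix.diagonal (fun i => (e i : ℂ)) with hE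
  have step1 : U * D * star U * (V * E * star V)
      = U * (D * (star U * (V * (E * star V)))) := by
    simp only [Matrix.mul_assoc]
  rw [step1, Matrix.trace_mul_comm]
  have step2 : D * (star U * (V * (E * star V))) * U = D * (star W * (E * W)) := by
    rw [hW, StarMul.star_mul, star_star]
    simp only [Matrix.mul_assoc]
  rw [step2, hD, trace_diagonal_mul']
  have entry : ∀ i, (star W * (E * W)) i i
      = ∑ j, (e j : ℂ) * ((Complex.normSq (W j i) : ℝ) : ℂ) := by
    intro i
    rw [Matrix.mul_apply]
    refine Finset.sum_congr rfl fun j _ => ?_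
    rw [hE, Matrix.diagonal_mul, Matrix.star_apply]
    have : (starRingEnd ℂ) (W j i) * W j i = ((Complex.normSq (W j i) : ℝ) : ℂ) := by
      rw [mul_comm]; exact Complex.mul_conj (W j i)
    calc (starRingEnd ℂ) (W j i) * ((e j : ℂ) * W j i)
        = (e j : ℂ) * ((starRingEnd ℂ) (W j i) * W j i) := by ring
      _ = (e j : ℂ) * ((Complex.normSq (W j i) : ℝ) : ℂ) := by rw [this]
  push_cast
  refine Finset.sum_congr rfl fun i _ => ?_
  rw [entry i, Finset.mul_sum]
  refine Finset.sum_congr rfl fun j _ => ?_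
  ring

lemma trace_matPow_mul {n : Type} [Fintype n] [DecidableEq n] {B C : Matrix n n ℂ}
    (hB : B.PosSemidef) (hC : C.PosSemidef) (r s : ℝ) :
    (matPow B r * matPow C s).trace =
      ((∑ i, ∑ j, (hB.1.eigenvalues i ^ r) * (hC.1.eigenvalues j ^ s) *
        Complex.normSq ((star (hC.1.eigenvectorUnitary : Matrix n n ℂ) *
          (hB.1.eigenvectorUnitary : Matrix n n ℂ)) j i) : ℝ) : ℂ) := by
  rw [matPow_of_hermitian hB.1, matPow_of_hermitian hC.1, trace_conj_mul_conj]

lemma trace_matPow_mul_re_nonneg {n : Type} [Fintype n] [DecidableEq n] {B C : Matrix n n ℂ}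
    (hB : B.PosSemidef) (hC : C.PosSemidef) (r s : ℝ) :
    0 ≤ ((matPow B r * matPow C s).trace).re := by
  rw [trace_matPow_mul hB hC, Complex.ofReal_re]
  refine Finset.sum_nonneg fun i _ => Finset.sum_nonneg fun j _ => ?_
  have h1 := Real.rpow_nonneg (hB.eigenvalues_nonneg i) r
  have h2 := Real.rpow_nonneg (hC.eigenvalues_nonneg j) s
  have h3 := Complex.normSq_nonneg ((star (hC.1.eigenvectorUnitary : Matrix n n ℂ) *
    (hB.1.eigenvectorUnitary : Matrix n n ℂ)) j i)
  positivity

lemma exists_pos_eigenvalue {n : Type} [Fintype n] [DecidableEq n] {B : Matrix n n ℂ}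
    (hB : B.PosSemidef) (htr : B.trace = 1) : ∃ i, 0 < hB.1.eigenvalues i := by
  by_contra hcon
  push_neg at hcon
  have hzero : ∀ i, hB.1.eigenvalues i = 0 :=
    fun i => le_antisymm (hcon i) (hB.eigenvalues_nonneg i)
  have hB0 : B = 0 := by
    have := hB.1.spectral_theorem
    rw [this]
    have : Matrix.diagonal (RCLike.ofReal ∘ hB.1.eigenvalues) = (0 : Matrix n n ℂ) := by
      rw [show RCLike.ofReal ∘ hB.1.eigenvalues = fun _ => (0 : ℂ) from
        funext fun i => by simp [hzero i], Matrix.diagonal_zero]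
    rw [this, map_zero]
  rw [hB0, Matrix.trace_zero] at htr
  exact one_ne_zero htr.symm

lemma trace_matPow_mul_re_pos {n : Type} [Fintype n] [DecidableEq n] {B C : Matrix n n ℂ}
    (hB : B.PosSemidef) (htr : B.trace = 1) (hC : C.PosSemidef)
    (hsub : SuppSubset B C) {r s : ℝ} (hr : 0 < r) (hs : s ≠ 0) :
    0 < ((matPow B r * matPow C s).trace).re := by
  classical
  set U : Matrix n n ℂ := (hB.1.eigenvectorUnitary : Matrix n n ℂ) with hUdef
  set V : Matrix n n ℂ := (hC.1.eigenvectorUnitary : Matrix n n ℂ) with hVdef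
  set W : Matrix n n ℂ := star V * U with hWdef
  set b : n → ℝ := hB.1.eigenvalues with hbdef
  set c : n → ℝ := hC.1.eigenvalues with hcdef
  obtain ⟨i, hbi⟩ := exists_pos_eigenvalue hB htr
  -- the i-th column of U
  set u : n → ℂ := fun k => U k i with hudef
  have hUunit := Unitary.mem_iff.mp hB.1.eigenvectorUnitary.2
  have hBU : B * U = U * Matrix.diagonal (RCLike.ofReal ∘ b) := by
    conv_lhs => rw [hB.1.spectral_theorem, Unitary.conjStarAlgAut_apply]
    rw [Matrix.mul_assoc, hUunit.1, Matrix.mul_one]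
  have hBu : B.mulVec u = fun k => U k i * (b i : ℂ) := by
    funext k
    have h1 : B.mulVec u k = (B * U) k i := by
      rw [Matrix.mul_apply, Matrix.mulVec]
      rfl
    rw [h1, hBU, Matrix.mul_diagonal]
    rfl
  have hu0 : u ≠ 0 := by
    intro h0
    have h1 : (star U * U) i i = 1 := by rw [hUunit.1]; simp [Matrix.one_apply]
    rw [Matrix.mul_apply] at h1
    have : ∀ k, (star U) i k * U k i = 0 := by
      intro k
      have : u k = 0 := congrFun h0 k
      rw [hudef] at this
      simp only [this, mul_zero]
    rw [Finset.sum_congr rfl (fun k _ => this k), Finset.sum_const_zero] at h1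
    exact one_ne_zero h1.symm
  have hBu0 : B.mulVec u ≠ 0 := by
    intro h0
    apply hu0
    funext k
    have := congrFun h0 k
    rw [hBu] at this
    have hbne : (b i : ℂ) ≠ 0 := by
      simp only [ne_eq, Complex.ofReal_eq_zero]
      exact ne_of_gt hbi
    exact (mul_eq_zero.mp this).resolve_right hbne
  have hCu0 : C.mulVec u ≠ 0 := fun h0 => hBu0 (hsub u h0)
  -- find j with c j ≠ 0 and W j i ≠ 0
  have hVunit := Unitary.mem_iff.mp hC.1.eigenvectorUnitary.2
  have hkey : ∃ j, c j ≠ 0 ∧ W j i ≠ 0 := by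
    by_contra hcon
    push_neg at hcon
    apply hCu0
    have hCdec : C.mulVec u = V.mulVec ((Matrix.diagonal (RCLike.ofReal ∘ c)).mulVec
        ((star V).mulVec u)) := by
      rw [Matrix.mulVec_mulVec, Matrix.mulVec_mulVec]
      conv_lhs => rw [hC.1.spectral_theorem, Unitary.conjStarAlgAut_apply]
    rw [hCdec]
    have hsVu : (star V).mulVec u = fun j => W j i := by
      funext j
      rw [Matrix.mulVec, hWdef, Matrix.mul_apply]
      rfl
    rw [hsVu]
    have : (Matrix.diagonal (RCLike.ofReal ∘ c)).mulVec (fun j => W j i) = 0 := by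
      funext j
      rw [Matrix.mulVec_diagonal]
      by_cases hcj : c j = 0
      · simp [Function.comp, hcj]
      · simp [hcon j hcj]
    rw [this, Matrix.mulVec_zero]
  obtain ⟨j, hcj, hWji⟩ := hkey
  have hcj' : 0 < c j := lt_of_le_of_ne (hC.eigenvalues_nonneg j) (Ne.symm hcj)
  rw [trace_matPow_mul hB hC, Complex.ofReal_re]
  have hterm : ∀ i' j', 0 ≤ b i' ^ r * (c j' ^ s) * Complex.normSq (W j' i') := by
    intro i' j'
    have h1 := Real.rpow_nonneg (hB.eigenvalues_nonneg i') r
    have h2 := Real.rpow_nonneg (hC.eigenvalues_nonneg j') s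
    have h3 := Complex.normSq_nonneg (W j' i')
    positivity
  refine Finset.sum_pos' (fun i' _ => Finset.sum_nonneg fun j' _ => hterm i' j')
    ⟨i, Finset.mem_univ i, ?_⟩
  refine Finset.sum_pos' (fun j' _ => hterm i j') ⟨j, Finset.mem_univ j, ?_⟩
  have h1 := Real.rpow_pos_of_pos hbi r
  have h2 := Real.rpow_pos_of_pos hcj' s
  have h3 := Complex.normSq_pos.mpr hWji
  positivity

lemma cqOp_mulVec {X A : Type} [Fintype X] [DecidableEq X] [Fintype A]
    (q : X → ℝ) (L : X → Matrix A A ℂ) (x : X) (w : A → ℂ) :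
    (cqOp q L).mulVec (fun pr => if pr.1 = x then w pr.2 else 0)
      = fun pr => if pr.1 = x then (q x : ℂ) * (L x).mulVec w pr.2 else 0 := by
  funext ⟨y, b⟩
  rw [Matrix.mulVec]
  simp only [dotProduct, Fintype.sum_prod_type, cqOp, Matrix.of_apply]
  by_cases hyx : y = x
  · subst hyx
    rw [Finset.sum_eq_single y]
    · simp only [if_pos rfl, Matrix.mulVec, dotProduct, Finset.mul_sum]
      refine Finset.sum_congr rfl fun c _ => ?_
      simp only [if_true]
      ring
    · intro z _ hzy
      refine Finset.sum_eq_zero fun c _ => ?_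
      rw [if_neg (Ne.symm hzy), zero_mul]
    · intro habs
      exact absurd (Finset.mem_univ y) habs
  · rw [if_neg hyx]
    refine Finset.sum_eq_zero fun z _ => Finset.sum_eq_zero fun c _ => ?_
    by_cases hzx : z = x
    · rw [if_neg (by rw [hzx]; exact hyx), zero_mul]
    · rw [if_neg hzx, mul_zero]

lemma supp_p_of_supp {X A : Type} [Fintype X] [DecidableEq X] [Fintype A] [DecidableEq A]
    {p q : X → ℝ} {κ lam : X → Matrix A A ℂ}
    (h : SuppSubset (cqOp p κ) (cqOp q lam)) (hκ : ∀ x, IsState (κ x)) :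
    ∀ x, p x ≠ 0 → q x ≠ 0 := by
  intro x hpx hqx
  obtain ⟨a, ha⟩ : ∃ a, κ x a a ≠ 0 := by
    by_contra hc
    push_neg at hc
    have h0 : (κ x).trace = 0 := by
      simp only [Matrix.trace, Matrix.diag]
      exact Finset.sum_eq_zero fun a _ => hc a
    rw [(hκ x).2] at h0
    exact one_ne_zero h0
  set w : A → ℂ := fun c => if c = a then 1 else 0 with hwdef
  have hmv : ∀ b, (κ x).mulVec w b = κ x b a := by
    intro b
    simp [hwdef, Matrix.mulVec, dotProduct, mul_ite, mul_one, mul_zero,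
      Finset.sum_ite_eq']
  have h1 : (cqOp q lam).mulVec (fun pr => if pr.1 = x then w pr.2 else 0) = 0 := by
    rw [cqOp_mulVec]
    funext pr
    by_cases hpr : pr.1 = x
    · simp [hpr, hqx]
    · simp [hpr]
  have h2 := h _ h1
  rw [cqOp_mulVec] at h2
  have h3 := congrFun h2 (x, a)
  simp only [if_pos rfl, Pi.zero_apply] at h3
  rw [hmv a] at h3
  rcases mul_eq_zero.mp h3 with hcase | hcase
  · exact hpx (by exact_mod_cast hcase)
  · exact ha hcase

lemma supp_blocks_of_supp {X A : Type} [Fintype X] [DecidableEq X] [Fintype A] [DecidableEq A]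
    {p q : X → ℝ} {κ lam : X → Matrix A A ℂ}
    (h : SuppSubset (cqOp p κ) (cqOp q lam)) :
    ∀ x, p x ≠ 0 → SuppSubset (κ x) (lam x) := by
  intro x hpx w hw
  have h1 : (cqOp q lam).mulVec (fun pr => if pr.1 = x then w pr.2 else 0) = 0 := by
    rw [cqOp_mulVec]
    funext pr
    by_cases hpr : pr.1 = x
    · simp [hpr, hw]
    · simp [hpr]
  have h2 := h _ h1
  rw [cqOp_mulVec] at h2
  funext b
  have h3 := congrFun h2 (x, b)
  simp only [if_pos rfl, Pi.zero_apply] at h3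
  rcases mul_eq_zero.mp h3 with hcase | hcase
  · exact absurd (by exact_mod_cast hcase) hpx
  · exact hcase

lemma coe_sum_ereal {X : Type} [Fintype X] (f : X → ℝ) :
    ((∑ x, f x : ℝ) : EReal) = ∑ x, ((f x : ℝ) : EReal) :=
  map_sum (⟨⟨Real.toEReal, EReal.coe_zero⟩, EReal.coe_add⟩ : ℝ →+ EReal) f Finset.univ

lemma T_pos {X : Type} [Fintype X] (α : ℝ) (hα : 1 < α) (p q t : X → ℝ)
    (hp0 : ∀ x, 0 ≤ p x) (hp1 : ∑ x, p x = 1) (hq : ∀ x, 0 ≤ q x)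
    (hpq : ∀ x, p x ≠ 0 → q x ≠ 0) (ht0 : ∀ x, 0 ≤ t x)
    (htpos : ∀ x, p x ≠ 0 → 0 < t x) :
    0 < ∑ x, p x ^ α * q x ^ (1 - α) * t x := by
  obtain ⟨x0, hx0⟩ : ∃ x, p x ≠ 0 := by
    by_contra hc
    push_neg at hc
    rw [Finset.sum_eq_zero (fun x _ => hc x)] at hp1
    exact one_ne_zero hp1.symm
  refine Finset.sum_pos' (fun x _ => ?_) ⟨x0, Finset.mem_univ x0, ?_⟩
  · have h1 := Real.rpow_nonneg (hp0 x) α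
    have h2 := Real.rpow_nonneg (hq x) (1 - α)
    have h3 := ht0 x
    positivity
  · have hp' : 0 < p x0 := lt_of_le_of_ne (hp0 x0) (Ne.symm hx0)
    have hq' : 0 < q x0 := lt_of_le_of_ne (hq x0) (Ne.symm (hpq x0 hx0))
    have h1 := Real.rpow_pos_of_pos hp' α
    have h2 := Real.rpow_pos_of_pos hq' (1 - α)
    have h3 := htpos x0 hx0
    positivity

lemma real_main {X : Type} [Fintype X] (α : ℝ) (hα : 1 < α) (p q t : X → ℝ)
    (hp0 : ∀ x, 0 ≤ p x) (hp1 : ∑ x, p x = 1) (hq : ∀ x, 0 ≤ q x)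
    (hpq : ∀ x, p x ≠ 0 → q x ≠ 0) (ht0 : ∀ x, 0 ≤ t x)
    (htpos : ∀ x, p x ≠ 0 → 0 < t x) :
    (∑ x, p x * Real.logb 2 (p x / q x)) +
      (∑ x, if p x = 0 then 0 else p x * ((α - 1)⁻¹ * Real.logb 2 (t x)))
      ≤ (α - 1)⁻¹ * Real.logb 2 (∑ x, p x ^ α * q x ^ (1 - α) * t x) := by
  classical
  set c : ℝ := α - 1 with hcdef
  have hc : 0 < c := by simp [hcdef]; linarith
  have hL2 : 0 < Real.log 2 := Real.log_pos one_lt_two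
  set s : Finset X := Finset.univ.filter (fun x => p x ≠ 0) with hsdef
  have hmem : ∀ x, x ∈ s ↔ p x ≠ 0 := by intro x; simp [hsdef]
  have hppos : ∀ x ∈ s, 0 < p x :=
    fun x hx => lt_of_le_of_ne (hp0 x) (Ne.symm ((hmem x).mp hx))
  have hqpos : ∀ x ∈ s, 0 < q x :=
    fun x hx => lt_of_le_of_ne (hq x) (Ne.symm (hpq x ((hmem x).mp hx)))
  have htpos' : ∀ x ∈ s, 0 < t x := fun x hx => htpos x ((hmem x).mp hx)
  have hps : ∑ x ∈ s, p x = 1 := by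
    rw [hsdef, Finset.sum_filter_ne_zero, hp1]
  set a : X → ℝ := fun x => (p x / q x) ^ c * t x with hadef
  have hapos : ∀ x ∈ s, 0 < a x := fun x hx =>
    mul_pos (Real.rpow_pos_of_pos (div_pos (hppos x hx) (hqpos x hx)) c) (htpos' x hx)
  have hsupp : ∀ f : X → ℝ, (∀ x, p x = 0 → f x = 0) → ∑ x, f x = ∑ x ∈ s, f x := by
    intro f hf
    refine (Finset.sum_subset (fun x _ => Finset.mem_univ x) fun x _ hxs => hf x ?_).symm
    by_contra hne
    exact hxs ((hmem x).mpr hne)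
  have h1 : (∑ x, p x * Real.logb 2 (p x / q x)) = ∑ x ∈ s, p x * Real.logb 2 (p x / q x) :=
    hsupp _ (fun x hx => by rw [hx, zero_mul])
  have h2 : (∑ x, if p x = 0 then 0 else p x * ((α - 1)⁻¹ * Real.logb 2 (t x)))
      = ∑ x ∈ s, p x * (c⁻¹ * Real.logb 2 (t x)) := by
    rw [hsupp _ (fun x hx => by rw [if_pos hx])]
    refine Finset.sum_congr rfl fun x hx => ?_
    rw [if_neg ((hmem x).mp hx), hcdef]
  have h3 : (∑ x, p x ^ α * q x ^ (1 - α) * t x) = ∑ x ∈ s, p x * a x := by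
    rw [hsupp _ (fun x hx => by
      rw [hx, Real.zero_rpow (by linarith : α ≠ 0), zero_mul, zero_mul])]
    refine Finset.sum_congr rfl fun x hx => ?_
    have hpx : 0 < p x := hppos x hx
    have hqx : 0 < q x := hqpos x hx
    have e1 : p x ^ α = p x * p x ^ c := by
      nth_rewrite 1 [show α = 1 + c by rw [hcdef]; ring]
      rw [Real.rpow_add hpx, Real.rpow_one]
    have e2 : q x ^ (1 - α) = (q x ^ c)⁻¹ := by
      rw [show (1 - α) = -c by rw [hcdef]; ring, Real.rpow_neg hqx.le]
    have e3 : (p x / q x) ^ c = p x ^ c / q x ^ c := Real.div_rpow hpx.le hqx.le c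
    have hqc : q x ^ c ≠ 0 := (Real.rpow_pos_of_pos hqx c).ne'
    rw [hadef]
    simp only [e1, e2, e3]
    field_simp
  rw [h1, h2, h3]
  -- Jensen via AM-GM
  have hgm := Real.geom_mean_le_arith_mean_weighted s p a (fun x hx => hp0 x) hps
    (fun x hx => (hapos x hx).le)
  have hprodpos : 0 < ∏ x ∈ s, a x ^ p x :=
    Finset.prod_pos fun x hx => Real.rpow_pos_of_pos (hapos x hx) _
  have hJ : ∑ x ∈ s, p x * Real.log (a x) ≤ Real.log (∑ x ∈ s, p x * a x) := by
    have hlog := Real.log_le_log hprodpos hgm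
    rw [Real.log_prod (fun x hx => (Real.rpow_pos_of_pos (hapos x hx) _).ne')] at hlog
    rw [show (∑ x ∈ s, Real.log (a x ^ p x)) = ∑ x ∈ s, p x * Real.log (a x) from
      Finset.sum_congr rfl fun x hx => Real.log_rpow (hapos x hx) _] at hlog
    exact hlog
  have hloga : ∀ x ∈ s, Real.log (a x) = c * Real.log (p x / q x) + Real.log (t x) := by
    intro x hx
    rw [hadef]
    rw [Real.log_mul (Real.rpow_pos_of_pos (div_pos (hppos x hx) (hqpos x hx)) c).ne'
      (htpos' x hx).ne', Real.log_rpow (div_pos (hppos x hx) (hqpos x hx))]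
  have key : ∑ x ∈ s, (p x * (c * Real.log (p x / q x)) + p x * Real.log (t x))
      ≤ Real.log (∑ x ∈ s, p x * a x) := by
    refine le_trans (le_of_eq (Finset.sum_congr rfl fun x hx => ?_)) hJ
    rw [hloga x hx]
    ring
  -- final algebra
  simp only [Real.logb]
  have expand : (∑ x ∈ s, p x * (Real.log (p x / q x) / Real.log 2))
      + ∑ x ∈ s, p x * (c⁻¹ * (Real.log (t x) / Real.log 2))
      = (c * Real.log 2)⁻¹ *
        ∑ x ∈ s, (p x * (c * Real.log (p x / q x)) + p x * Real.log (t x)) := by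
    rw [← Finset.sum_add_distrib, Finset.mul_sum]
    refine Finset.sum_congr rfl fun x hx => ?_
    field_simp
  rw [expand, show c⁻¹ * (Real.log (∑ x ∈ s, p x * a x) / Real.log 2)
      = (c * Real.log 2)⁻¹ * Real.log (∑ x ∈ s, p x * a x) by field_simp]
  exact mul_le_mul_of_nonneg_left key (by positivity)

/-- Direct-sum inequality for the Petz Rényi relative entropy:
for every `α > 1` and classical–quantum `κ`, `λ`,
`D_α(κ‖λ) ≥ D(p‖q) + ∑ x p(x) D_α(κ_x‖λ_x)`. -/
theorem petzRenyi_directSum {X A : Type} [Fintype X] [DecidableEq X] [Fintype A] [DecidableEq A]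
    (α : ℝ) (hα : 1 < α)
    (p q : X → ℝ) (κ lam : X → Matrix A A ℂ)
    (hp : IsProb p) (hκ : ∀ x, IsState (κ x))
    (hq : ∀ x, 0 ≤ q x) (hlam : ∀ x, (lam x).PosSemidef) :
    petzRenyi α (cqOp p κ) (cqOp q lam) ≥
      cRelEnt p q + ∑ x, (p x : EReal) * petzRenyi α (κ x) (lam x) := by
  rw [ge_iff_le]
  by_cases hsupp : SuppSubset (cqOp p κ) (cqOp q lam)
  · have hpq : ∀ x, p x ≠ 0 → q x ≠ 0 := supp_p_of_supp hsupp hκ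
    have hsub : ∀ x, p x ≠ 0 → SuppSubset (κ x) (lam x) := supp_blocks_of_supp hsupp
    set t : X → ℝ := fun x => ((matPow (κ x) α * matPow (lam x) (1 - α)).trace).re with htdef
    have ht0 : ∀ x, 0 ≤ t x := fun x =>
      trace_matPow_mul_re_nonneg (hκ x).1 (hlam x) α (1 - α)
    have htpos : ∀ x, p x ≠ 0 → 0 < t x := fun x hx =>
      trace_matPow_mul_re_pos (hκ x).1 (hκ x).2 (hlam x) (hsub x hx)
        (by linarith : (0:ℝ) < α) (by intro h; linarith [sub_eq_zero.mp h] : (1:ℝ) - α ≠ 0)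
    have hT : ((matPow (cqOp p κ) α * matPow (cqOp q lam) (1 - α)).trace).re
        = ∑ x, p x ^ α * q x ^ (1 - α) * t x := by
      rw [matPow_cqOp p hp.1 κ (fun x => (hκ x).1) α,
        matPow_cqOp q hq lam hlam (1 - α), trace_cqOp_mul, Complex.re_sum]
      refine Finset.sum_congr rfl fun x _ => ?_
      rw [Complex.re_ofReal_mul, htdef]
    have hTpos : 0 < ∑ x, p x ^ α * q x ^ (1 - α) * t x :=
      T_pos α hα p q t hp.1 hp.2 hq hpq ht0 htpos
    rw [petzRenyi, if_pos (Or.inr ⟨hα, hsupp⟩), hT, elog2, if_neg (not_le.mpr hTpos),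
      ← EReal.coe_mul, cRelEnt, if_pos hpq]
    have hsum : ∀ x, (p x : EReal) * petzRenyi α (κ x) (lam x)
        = (((if p x = 0 then 0 else p x * ((α - 1)⁻¹ * Real.logb 2 (t x))) : ℝ) : EReal) := by
      intro x
      by_cases hx : p x = 0
      · rw [if_pos hx, hx, EReal.coe_zero, EReal.zero_mul]
      · rw [if_neg hx, petzRenyi, if_pos (Or.inr ⟨hα, hsub x hx⟩), elog2,
          if_neg (not_le.mpr (htpos x hx)), ← EReal.coe_mul, ← EReal.coe_mul]
    rw [Finset.sum_congr rfl (fun x _ => hsum x), ← coe_sum_ereal, ← EReal.coe_add]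
    exact EReal.coe_le_coe_iff.mpr (real_main α hα p q t hp.1 hp.2 hq hpq ht0 htpos)
  · rw [petzRenyi, if_neg]
    · exact le_top
    · rintro (⟨_, h2⟩ | ⟨_, h2⟩)
      · linarith
      · exact hsupp h2

end RainsPaper
end
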